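/- (In classical logic.) If 𝒱 is a basic-open natural space, then 𝒱 is isomorphic to a basic-open spread whose underlying tree is the tree (ℕ*,⊑) of natural Baire space. -/

import Mathlib

/-! # Natural Topology: basic framework (Waaldijk) -/

/-- A pre-natural space: a countable set of basic dots with a decidable
pre-apartness `apart` and a decidable refinement partial order `refines`. -/
structure PreNaturalSpace (V : Type) : Type where
  countable' : Countable V
  apart : V → V → Prop
  refines : V → V → Prop
  apart_dec : DecidableRel apart
  refines_dec : DecidableRel refines
  apart_symm : ∀ a b, apart a b → apart b a
  apart_irrefl : ∀ a, ¬ apart a a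
  apart_mono : ∀ a b c, refines a b → apart c b → apart c a
  refines_refl : ∀ a, refines a a
  refines_trans : ∀ a b c, refines a b → refines b c → refines a c
  refines_antisymm : ∀ a b, refines a b → refines b a → a = b

namespace PreNaturalSpace

variable {V W : Type}

/-- `a ≺ b` : strict refinement. -/
def strict (P : PreNaturalSpace V) (a b : V) : Prop := P.refines a b ∧ a ≠ b

/-- A point is a shrinking sequence of dots deciding every apart pair of dots. -/
structure IsPoint (P : PreNaturalSpace V) (p : ℕ → V) : Prop where
  mono : ∀ n, P.refines (p (n + 1)) (p n)
  shrink : ∀ n, ∃ m, P.strict (p m) (p n)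
  decides : ∀ a b, P.apart a b → ∃ m, P.apart (p m) a ∨ P.apart (p m) b

/-- The set of points of a pre-natural space. -/
def Pt (P : PreNaturalSpace V) : Type := { p : ℕ → V // P.IsPoint p }

/-- `p` begins with the dot `a` : some `p m ≺ a`. -/
def begins (P : PreNaturalSpace V) (p : ℕ → V) (a : V) : Prop := ∃ m, P.strict (p m) a

/-- Apartness between a dot and a point. -/
def dApart (P : PreNaturalSpace V) (a : V) (p : ℕ → V) : Prop := ∃ m, P.apart (p m) a

/-- Apartness between points. -/
def pApart (P : PreNaturalSpace V) (p q : P.Pt) : Prop := ∃ n, P.apart (p.1 n) (q.1 n)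

/-- Equivalence of points: the negation of apartness. -/
def pEquiv (P : PreNaturalSpace V) (p q : P.Pt) : Prop := ¬ P.pApart p q

variable (P : PreNaturalSpace V)

lemma refines_of_le {p : ℕ → V} (hp : ∀ n, P.refines (p (n + 1)) (p n)) :
    ∀ {m k : ℕ}, m ≤ k → P.refines (p k) (p m) := by
  intro m k h
  induction h with
  | refl => exact P.refines_refl _
  | step h ih => exact P.refines_trans _ _ _ (hp _) ih

lemma begins_mono {z : ℕ → V} (hz : P.IsPoint z) {a b : V} (hab : P.refines a b)
    (h : P.begins z a) : P.begins z b := by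
  obtain ⟨j, hj1, hj2⟩ := h
  have hzb : P.refines (z j) b := P.refines_trans _ _ _ hj1 hab
  by_cases he : z j = b
  · obtain ⟨i, hi1, hi2⟩ := hz.shrink j
    exact ⟨i, P.refines_trans _ _ _ hi1 hzb, fun h' => hi2 (h'.trans he.symm)⟩
  · exact ⟨j, hzb, he⟩

/-- The natural (apartness) topology as a predicate on subsets of the point set. -/
def NatOpen (U : Set P.Pt) : Prop :=
  ∀ x ∈ U, ∀ y : P.Pt, P.pApart y x ∨ ∃ m, { z : P.Pt | P.begins z.1 (y.1 m) } ⊆ U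

instance instTopPt : TopologicalSpace P.Pt where
  IsOpen := P.NatOpen
  isOpen_univ := fun _ _ _ => Or.inr ⟨0, fun _ _ => trivial⟩
  isOpen_inter := by
    intro U U' hU hU' x hx y
    rcases hU x hx.1 y with h | ⟨m, hm⟩
    · exact Or.inl h
    rcases hU' x hx.2 y with h | ⟨k, hk⟩
    · exact Or.inl h
    refine Or.inr ⟨max m k, fun z hz => ⟨hm ?_, hk ?_⟩⟩
    · exact P.begins_mono z.2 (P.refines_of_le y.2.mono (le_max_left m k)) hz
    · exact P.begins_mono z.2 (P.refines_of_le y.2.mono (le_max_right m k)) hz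
  isOpen_sUnion := by
    intro S hS x hx y
    obtain ⟨U, hU, hxU⟩ := hx
    rcases hS U hU x hxU y with h | ⟨m, hm⟩
    · exact Or.inl h
    · exact Or.inr ⟨m, fun z hz => ⟨U, hU, hm hz⟩⟩

lemma pEquiv_refl (p : P.Pt) : P.pEquiv p p := fun ⟨_, h⟩ => P.apart_irrefl _ h

lemma pEquiv_symm {p q : P.Pt} (h : P.pEquiv p q) : P.pEquiv q p :=
  fun ⟨n, hn⟩ => h ⟨n, P.apart_symm _ _ hn⟩

lemma pEquiv_trans {p q r : P.Pt} (hpq : P.pEquiv p q) (hqr : P.pEquiv q r) :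
    P.pEquiv p r := by
  rintro ⟨n, hn⟩
  obtain ⟨m, hm⟩ := q.2.decides (p.1 n) (r.1 n) hn
  rcases hm with hm | hm
  · -- q.1 m apart from p.1 n
    refine hpq ⟨max m n, ?_⟩
    have h1 : P.apart (p.1 n) (q.1 (max m n)) :=
      P.apart_mono _ _ _ (P.refines_of_le q.2.mono (le_max_left m n)) (P.apart_symm _ _ hm)
    have h2 : P.apart (q.1 (max m n)) (p.1 (max m n)) :=
      P.apart_mono _ _ _ (P.refines_of_le p.2.mono (le_max_right m n)) (P.apart_symm _ _ h1)
    exact P.apart_symm _ _ h2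
  · refine hqr ⟨max m n, ?_⟩
    have h1 : P.apart (r.1 n) (q.1 (max m n)) :=
      P.apart_mono _ _ _ (P.refines_of_le q.2.mono (le_max_left m n)) (P.apart_symm _ _ hm)
    exact P.apart_mono _ _ _ (P.refines_of_le r.2.mono (le_max_right m n))
      (P.apart_symm _ _ h1)

/-- The setoid of points modulo `≡`. -/
def ptSetoid : Setoid P.Pt :=
  ⟨P.pEquiv, ⟨P.pEquiv_refl, P.pEquiv_symm, P.pEquiv_trans⟩⟩

/-- `â` : the set of points beginning with the dot `a`. -/
def hatSet (a : V) : Set P.Pt := { p | P.begins p.1 a }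

/-- `ā` : the `≡`-closure of `â`. -/
def barSet (a : V) : Set P.Pt := { p | ∃ q : P.Pt, P.begins q.1 a ∧ P.pEquiv p q }

/-- A natural space is basic-open when every `ā` is open. -/
def BasicOpen : Prop := ∀ a : V, IsOpen (P.barSet a)

/-- Existence of a maximal dot. -/
def HasMaxDot : Prop := ∃ m, ∀ a, P.refines a m

/-- Every basic dot begins at least one point. -/
def AllDotsInhabited : Prop := ∀ a : V, ∃ p : ℕ → V, P.IsPoint p ∧ P.begins p a

/-- The conditions making the point set of a pre-natural space a natural space. -/
def IsNaturalSpace : Prop := P.HasMaxDot ∧ P.AllDotsInhabited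

end PreNaturalSpace

/-- A refinement morphism between (pre-)natural spaces: a map on dots sending
points to points and reflecting apartness of points. -/
structure RefMorphism {V W : Type} (P : PreNaturalSpace V) (Q : PreNaturalSpace W) : Type where
  toFun : V → W
  maps_points : ∀ p : ℕ → V, P.IsPoint p → Q.IsPoint (fun n => toFun (p n))
  reflects_apart : ∀ p q : ℕ → V, P.IsPoint p → P.IsPoint q →
    (∃ n, Q.apart (toFun (p n)) (toFun (q n))) → ∃ n, P.apart (p n) (q n)

/-- The induced map on points of a refinement morphism. -/
def RefMorphism.pointMap {V W : Type} {P : PreNaturalSpace V} {Q : PreNaturalSpace W}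
    (f : RefMorphism P Q) (p : P.Pt) : Q.Pt :=
  ⟨fun n => f.toFun (p.1 n), f.maps_points p.1 p.2⟩

namespace PreNaturalSpace

variable {V W : Type} (P : PreNaturalSpace V)

/-- Restriction of a pre-natural space to a subset of dots. -/
noncomputable def restrict (S : Set V) : PreNaturalSpace S where
  countable' := by haveI := P.countable'; exact inferInstance
  apart a b := P.apart a.1 b.1
  refines a b := P.refines a.1 b.1
  apart_dec := Classical.decRel _
  refines_dec := Classical.decRel _
  apart_symm _ _ h := P.apart_symm _ _ h
  apart_irrefl a := P.apart_irrefl a.1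
  apart_mono _ _ _ h1 h2 := P.apart_mono _ _ _ h1 h2
  refines_refl a := P.refines_refl a.1
  refines_trans _ _ _ h1 h2 := P.refines_trans _ _ _ h1 h2
  refines_antisymm _ _ h1 h2 := Subtype.ext (P.refines_antisymm _ _ h1 h2)

/-! ## Trail spaces -/

/-- A `≺`-trail: a finite strictly refining sequence `a₀ ≻ a₁ ≻ …`. -/
def Trail : Type := { l : List V // l.Chain' fun a b => P.strict b a }

lemma strict_trans_flip : Transitive (fun a b : V => P.strict b a) := by
  rintro a b c ⟨h1, h1'⟩ ⟨h2, h2'⟩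
  refine ⟨P.refines_trans _ _ _ h2 h1, fun he => ?_⟩
  exact h2' (P.refines_antisymm _ _ h2 (he ▸ h1))

lemma last_refines_of_prefix {a b : List V}
    (ha : a.Chain' fun x y => P.strict y x) (hpre : b <+: a)
    {x y : V} (hx : x ∈ a.getLast?) (hy : y ∈ b.getLast?) :
    P.refines x y := by
  haveI : IsTrans V (fun x y : V => P.strict y x) := ⟨fun _ _ _ h1 h2 => P.strict_trans_flip h1 h2⟩
  have hpw : a.Pairwise fun x y => P.strict y x := List.isChain_iff_pairwise.mp ha
  obtain ⟨t, rfl⟩ := hpre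
  rcases eq_or_ne t [] with rfl | ht
  · rw [List.append_nil] at hx
    have : x = y := by
      rw [Option.mem_def] at hx hy
      exact Option.some_injective _ (hx ▸ hy ▸ rfl)
    exact this ▸ P.refines_refl x
  · rw [List.getLast?_append_of_ne_nil _ ht] at hx
    have hxt : x ∈ t := List.mem_of_mem_getLast? hx
    have hyb : y ∈ b := List.mem_of_mem_getLast? hy
    have := (List.pairwise_append.mp hpw).2.2 y hyb x hxt
    exact this.1

/-- The trail space of a pre-natural space: dots are `≺`-trails, with
`a ⊑* b` iff `b` is an initial segment of `a`, and `a #* b` iff the last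
dots of `a` and `b` are apart. -/
noncomputable def trailSpace : PreNaturalSpace P.Trail where
  countable' := by haveI := P.countable'; exact inferInstanceAs (Countable
    { l : List V // l.Chain' fun a b => P.strict b a })
  apart a b := ∃ x ∈ a.1.getLast?, ∃ y ∈ b.1.getLast?, P.apart x y
  refines a b := b.1 <+: a.1
  apart_dec := Classical.decRel _
  refines_dec := Classical.decRel _
  apart_symm := by
    rintro a b ⟨x, hx, y, hy, hxy⟩
    exact ⟨y, hy, x, hx, P.apart_symm _ _ hxy⟩
  apart_irrefl := by
    rintro a ⟨x, hx, y, hy, hxy⟩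
    rw [Option.mem_def] at hx hy
    have : x = y := Option.some_injective _ (hx ▸ hy ▸ rfl)
    exact P.apart_irrefl x (this ▸ hxy)
  apart_mono := by
    rintro a b c hab ⟨x, hx, y, hy, hxy⟩
    have hbne : b.1 ≠ [] := by
      intro h
      rw [h] at hy
      simp at hy
    have hane : a.1 ≠ [] := by
      intro h
      exact hbne (List.prefix_nil.mp (h ▸ hab))
    obtain ⟨z, hz⟩ : ∃ z, z ∈ a.1.getLast? := by
      rcases h : a.1.getLast? with _ | z
      · exact absurd (List.getLast?_eq_none_iff.mp h) hane
      · exact ⟨z, rfl⟩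
    have hzy : P.refines z y := P.last_refines_of_prefix a.2 hab hz hy
    exact ⟨x, hx, z, hz, P.apart_mono _ _ _ hzy hxy⟩
  refines_refl a := List.prefix_refl a.1
  refines_trans _ _ _ h1 h2 := h2.trans h1
  refines_antisymm a b h1 h2 :=
    Subtype.ext (h2.eq_of_length (le_antisymm h2.length_le h1.length_le))

end PreNaturalSpace

open Classical in
/-- `p♯(n)` : the `≺`-trail obtained from `p₀, …, p_{n-1}` by deleting repetitions
(for a shrinking sequence `p`, repetitions are consecutive). -/
noncomputable def segList {V : Type} (p : ℕ → V) : ℕ → List V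
  | 0 => []
  | n + 1 =>
    if (segList p n).getLast? = some (p n) then segList p n
    else segList p n ++ [p n]

namespace PreNaturalSpace

variable {V W : Type} (P : PreNaturalSpace V)

/-- The map on trail dots sending a nonempty trail to its last element and
the empty trail to `m`. -/
def lastDot (m : V) (q : P.Trail) : V := q.1.getLast?.getD m

/-- `g` is the point map induced by a trail morphism `f` (a refinement morphism
on the trail space): `g p = f (p♯(0)), f (p♯(1)), …`. -/
def InducedByTrailMorphism (Q : PreNaturalSpace W) (f : RefMorphism P.trailSpace Q)
    (g : P.Pt → Q.Pt) : Prop :=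
  ∀ p : P.Pt, ∃ t : P.trailSpace.Pt, (∀ n, (t.1 n).1 = segList p.1 n) ∧ g p = f.pointMap t

/-- `g` is a natural morphism map: induced by a refinement morphism or by a trail morphism. -/
def IsNaturalMorphismMap (Q : PreNaturalSpace W) (g : P.Pt → Q.Pt) : Prop :=
  (∃ f : RefMorphism P Q, ∀ p, g p = f.pointMap p) ∨
  (∃ f : RefMorphism P.trailSpace Q, P.InducedByTrailMorphism Q f g)

/-- Two natural spaces are isomorphic: natural morphisms both ways, inverse up to `≡`. -/
def AreIsomorphic (Q : PreNaturalSpace W) : Prop :=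
  ∃ (f : P.Pt → Q.Pt) (g : Q.Pt → P.Pt),
    P.IsNaturalMorphismMap Q f ∧ Q.IsNaturalMorphismMap P g ∧
    (∀ x, P.pEquiv (g (f x)) x) ∧ (∀ y, Q.pEquiv (f (g y)) y)

/-- A natural space is a basic neighborhood space iff it is isomorphic to a basic-open space. -/
def IsBasicNbhdSpace : Prop :=
  ∃ (W' : Type) (Q : PreNaturalSpace W'), Q.IsNaturalSpace ∧ Q.BasicOpen ∧ P.AreIsomorphic Q

/-! ## Trees, treas, spreads, spraids, fans -/

/-- `a` is a successor of `c`. -/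
def IsSucc (a c : V) : Prop := P.strict a c ∧ ∀ b, P.strict a b → P.refines b c → b = c

/-- A successor-trail (as a list, each entry a successor of the previous one). -/
def SuccChain (l : List V) : Prop := l.Chain' fun x y => P.IsSucc y x

/-- A successor-trail from `m` to `a`. -/
def IsSuccTrailFromTo (m a : V) (l : List V) : Prop :=
  P.SuccChain l ∧ l.head? = some m ∧ l.getLast? = some a

/-- `(V,⊑)` is a tree. -/
def IsTree : Prop :=
  ∃ m, (∀ a, P.refines a m) ∧ ∀ a, ∃! l : List V, P.IsSuccTrailFromTo m a l

/-- `(V,⊑)` is a trea. -/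
def IsTrea : Prop :=
  ∃ m, (∀ a, P.refines a m) ∧ (∀ a, { b | P.refines a b }.Finite) ∧
    ∀ a, ∃ g : ℕ, ∀ l : List V, P.IsSuccTrailFromTo m a l → l.length = g

/-- Every infinite successor-trail is a point. -/
def SuccTrailsArePoints : Prop :=
  ∀ q : ℕ → V, (∀ n, P.IsSucc (q (n + 1)) (q n)) → P.IsPoint q

def IsSpread : Prop := P.IsTree ∧ P.SuccTrailsArePoints

def IsSpraid : Prop := P.IsTrea ∧ P.SuccTrailsArePoints

/-- Finitely branching: every dot has finitely many successors. -/
def FinBranching : Prop := ∀ a : V, { b | P.IsSucc b a }.Finite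

def IsFan : Prop := P.IsSpread ∧ P.FinBranching

def IsFann : Prop := P.IsSpraid ∧ P.FinBranching

end PreNaturalSpace
/-! ## Natural Baire space and natural Cantor space -/

/-- Natural Baire space: dots are finite sequences of naturals, `b ⊑ a` iff
`a` is an initial segment of `b`, apart iff incomparable. -/
noncomputable def BairePre : PreNaturalSpace (List ℕ) where
  countable' := inferInstance
  apart a b := ¬ a <+: b ∧ ¬ b <+: a
  refines a b := b <+: a
  apart_dec := Classical.decRel _
  refines_dec := Classical.decRel _
  apart_symm _ _ h := ⟨h.2, h.1⟩
  apart_irrefl a h := h.1 (List.prefix_refl a)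
  apart_mono := by
    intro a b c hab hcb
    constructor
    · intro hca
      rcases List.prefix_or_prefix_of_prefix hca hab with h | h
      · exact hcb.1 h
      · exact hcb.2 h
    · intro hac
      exact hcb.2 (hab.trans hac)
  refines_refl a := List.prefix_refl a
  refines_trans _ _ _ h1 h2 := h2.trans h1
  refines_antisymm _ _ h1 h2 := h2.eq_of_length (le_antisymm h2.length_le h1.length_le)

/-- Natural Cantor space: the restriction of natural Baire space to finite 0-1 sequences. -/
noncomputable def CantorPre : PreNaturalSpace ({ l : List ℕ | ∀ x ∈ l, x ≤ 1 }) :=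
  BairePre.restrict { l : List ℕ | ∀ x ∈ l, x ≤ 1 }

/-- The sequence of initial segments of `α ∈ ℕ^ℕ`. -/
def initSegs (α : ℕ → ℕ) (n : ℕ) : List ℕ := (List.range n).map α

/-! ## Auxiliary material for Statement 12 -/

namespace PreNaturalSpace


variable {V : Type} (P : PreNaturalSpace V)

lemma no_apart_of_common {a b c : V} (h1 : P.refines c a) (h2 : P.refines c b) :
    ¬ P.apart a b := fun hab => by
  have h3 : P.apart c a := P.apart_symm _ _ (P.apart_mono c b a h2 hab)
  exact P.apart_irrefl c (P.apart_mono c a c h1 h3)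

lemma strict_of_strict_refines {a b c : V} (h1 : P.strict a b) (h2 : P.refines b c) :
    P.strict a c := by
  refine ⟨P.refines_trans _ _ _ h1.1 h2, fun he => h1.2 ?_⟩
  exact P.refines_antisymm _ _ h1.1 (he ▸ h2)

lemma strict_of_refines_strict {a b c : V} (h1 : P.refines a b) (h2 : P.strict b c) :
    P.strict a c := by
  refine ⟨P.refines_trans _ _ _ h1 h2.1, fun he => h2.2 ?_⟩
  exact P.refines_antisymm _ _ h2.1 (he ▸ h1)

lemma shrink_gt {p : ℕ → V} (hp : P.IsPoint p) {m n : ℕ} (h : P.strict (p m) (p n)) :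
    n < m := by
  by_contra hle
  push_neg at hle
  exact h.2 (P.refines_antisymm _ _ h.1 (P.refines_of_le hp.mono hle))

/-- terms of a point are never apart. -/
lemma point_terms_not_apart {p : ℕ → V} (hp : P.IsPoint p) (m n : ℕ) :
    ¬ P.apart (p m) (p n) :=
  P.no_apart_of_common (P.refines_of_le hp.mono (le_max_left m n))
    (P.refines_of_le hp.mono (le_max_right m n))

/-- a point refining `c` somewhere refines it strictly somewhere. -/
lemma point_strict_of_refines {p : ℕ → V} (hp : P.IsPoint p) {c : V}
    (h : ∃ j, P.refines (p j) c) : ∃ j, P.strict (p j) c := by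
  obtain ⟨j, hj⟩ := h
  obtain ⟨m, hm⟩ := hp.shrink j
  exact ⟨m, P.strict_of_strict_refines hm hj⟩

/-- prefix chains. -/
lemma prefix_chain {β : Type*} {t : ℕ → List β} (h : ∀ n, t n <+: t (n + 1)) :
    ∀ {m k : ℕ}, m ≤ k → t m <+: t k := by
  intro m k hmk
  induction hmk with
  | refl => exact List.prefix_refl _
  | step h' ih => exact ih.trans (h _)

/-- refines-last lemma for strict chains: the last element refines every member. -/
lemma chain_last_refines {l : List V} (hl : l.Chain' fun a b => P.strict b a)
    {x y : V} (hx : x ∈ l) (hy : y ∈ l.getLast?) : P.refines y x := by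
  haveI : IsTrans V (fun x y : V => P.strict y x) :=
    ⟨fun _ _ _ h1 h2 => P.strict_trans_flip h1 h2⟩
  have hsplit := List.dropLast_append_getLast? _ hy
  have hpw := List.isChain_iff_pairwise.mp hl
  rw [← hsplit] at hpw hx
  rcases List.mem_append.mp hx with h | h
  · exact ((List.pairwise_append.mp hpw).2.2 x h y (List.mem_singleton_self _)).1
  · rw [List.mem_singleton.mp h]
    exact P.refines_refl y

/-- the last element of a proper chain extension strictly refines the last of the prefix. -/
lemma chain_last_strict {l l' : List V} (hl' : l'.Chain' fun a b => P.strict b a)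
    (hpre : l <+: l') (hne : l ≠ l') {x y : V}
    (hx : x ∈ l'.getLast?) (hy : y ∈ l.getLast?) : P.strict x y := by
  haveI : IsTrans V (fun x y : V => P.strict y x) :=
    ⟨fun _ _ _ h1 h2 => P.strict_trans_flip h1 h2⟩
  obtain ⟨r, rfl⟩ := hpre
  have hr : r ≠ [] := by rintro rfl; simp at hne
  rw [List.getLast?_append_of_ne_nil _ hr] at hx
  have hxr : x ∈ r := List.mem_of_mem_getLast? hx
  have hyl : y ∈ l := List.mem_of_mem_getLast? hy
  have hpw := List.isChain_iff_pairwise.mp hl'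
  exact (List.pairwise_append.mp hpw).2.2 y hyl x hxr

lemma lengths_unbounded {β : Type*} {t : ℕ → List β}
    (hshr : ∀ n, ∃ m, t n <+: t m ∧ t n ≠ t m) :
    ∀ N, ∃ n, N ≤ (t n).length := by
  intro N
  induction N with
  | zero => exact ⟨0, Nat.zero_le _⟩
  | succ N ih =>
    obtain ⟨n, hn⟩ := ih
    obtain ⟨m, hm, hne⟩ := hshr n
    refine ⟨m, ?_⟩
    have := hm.length_le
    have hlt : (t n).length < (t m).length := by
      rcases lt_or_eq_of_le this with h | h
      · exact h
      · exact absurd (hm.eq_of_length h) hne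
    omega

end PreNaturalSpace
namespace Stmt12Aux

open Classical

variable {V : Type}

/-- Bundled data for the spread construction. -/
structure Setup (P : PreNaturalSpace V) : Type where
  M : V
  hM : ∀ a, P.refines a M
  hinh : P.AllDotsInhabited
  e : ℕ → V
  he : Function.Surjective e
  pe : ℕ → V × V
  hpe : Function.Surjective pe

namespace Setup

variable {P : PreNaturalSpace V} (S : Setup P)

/-- `d` decides the `n`-th apartness pair. -/
def decOK (d : V) (n : ℕ) : Prop :=
  P.apart (S.pe n).1 (S.pe n).2 → (P.apart d (S.pe n).1 ∨ P.apart d (S.pe n).2)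

lemma decOK_mono {d d' : V} (h : P.refines d' d) {n : ℕ} (hd : S.decOK d n) :
    S.decOK d' n := by
  intro hap
  rcases hd hap with h1 | h1
  · exact Or.inl (P.apart_symm _ _ (P.apart_mono _ _ _ h (P.apart_symm _ _ h1)))
  · exact Or.inr (P.apart_symm _ _ (P.apart_mono _ _ _ h (P.apart_symm _ _ h1)))

/-- a point deciding the `n`-th pair yields (below any given bound it begins)
a strictly refining decided dot. -/
lemma point_good {p : ℕ → V} (hp : P.IsPoint p) {c : V}
    (h : ∃ j, P.refines (p j) c) (n : ℕ) :
    ∃ j, P.strict (p j) c ∧ S.decOK (p j) n := by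
  obtain ⟨j, hj⟩ := P.point_strict_of_refines hp h
  by_cases hap : P.apart (S.pe n).1 (S.pe n).2
  · obtain ⟨i, hi⟩ := hp.decides _ _ hap
    refine ⟨max i j, P.strict_of_refines_strict
      (P.refines_of_le hp.mono (le_max_right i j)) hj, fun _ => ?_⟩
    have hr : P.refines (p (max i j)) (p i) := P.refines_of_le hp.mono (le_max_left i j)
    rcases hi with h1 | h1
    · exact Or.inl (P.apart_symm _ _ (P.apart_mono _ _ _ hr (P.apart_symm _ _ h1)))
    · exact Or.inr (P.apart_symm _ _ (P.apart_mono _ _ _ hr (P.apart_symm _ _ h1)))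
  · exact ⟨j, hj, fun hap' => absurd hap' hap⟩

lemma exists_dec (c : V) (n : ℕ) : ∃ d, P.strict d c ∧ S.decOK d n := by
  obtain ⟨p, hp, hbeg⟩ := S.hinh c
  obtain ⟨j, hj⟩ := hbeg
  obtain ⟨i, hi⟩ := S.point_good hp ⟨j, hj.1⟩ n
  exact ⟨p i, hi⟩

/-- canonical default move. -/
noncomputable def defaultDot (c : V) (n : ℕ) : V := (S.exists_dec c n).choose

lemma defaultDot_spec (c : V) (n : ℕ) :
    P.strict (S.defaultDot c n) c ∧ S.decOK (S.defaultDot c n) n :=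
  (S.exists_dec c n).choose_spec

/-- one step of the spread dynamics. -/
noncomputable def stepD (c : V) (n : ℕ) (m : ℕ) : V :=
  if P.strict (S.e m) c ∧ S.decOK (S.e m) n then S.e m else S.defaultDot c n

lemma stepD_strict (c : V) (n m : ℕ) : P.strict (S.stepD c n m) c := by
  unfold stepD; split
  · next h => exact h.1
  · exact (S.defaultDot_spec c n).1

lemma stepD_decOK (c : V) (n m : ℕ) : S.decOK (S.stepD c n m) n := by
  unfold stepD; split
  · next h => exact h.2
  · exact (S.defaultDot_spec c n).2

/-- running the dynamics from state `c` at stage `n`. -/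
noncomputable def dotGo (S : Setup P) : V → ℕ → List ℕ → V
  | c, _, [] => c
  | c, n, m :: r => dotGo S (S.stepD c n m) (n + 1) r

/-- the dot associated to a finite sequence of naturals. -/
noncomputable def dotOf (s : List ℕ) : V := S.dotGo S.M 0 s

lemma dotGo_split (r₁ : List ℕ) : ∀ (r₂ : List ℕ) (c : V) (n : ℕ),
    S.dotGo c n (r₁ ++ r₂) = S.dotGo (S.dotGo c n r₁) (n + r₁.length) r₂ := by
  induction r₁ with
  | nil => intro r₂ c n; simp [dotGo]
  | cons m r ih =>
    intro r₂ c n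
    simp only [List.cons_append, dotGo, List.length_cons]
    rw [ih]
    congr 1
    omega

lemma dotGo_refines (r : List ℕ) : ∀ (c : V) (n : ℕ), P.refines (S.dotGo c n r) c := by
  induction r with
  | nil => intro c n; exact P.refines_refl c
  | cons m r ih =>
    intro c n
    exact P.refines_trans _ _ _ (ih _ _) (S.stepD_strict c n m).1

lemma dotGo_strict {r : List ℕ} (hr : r ≠ []) (c : V) (n : ℕ) :
    P.strict (S.dotGo c n r) c := by
  cases r with
  | nil => exact absurd rfl hr
  | cons m r =>
    exact P.strict_of_refines_strict (S.dotGo_refines r _ _) (S.stepD_strict c n m)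

lemma dotOf_append (s r : List ℕ) :
    S.dotOf (s ++ r) = S.dotGo (S.dotOf s) s.length r := by
  simpa [dotOf] using S.dotGo_split s r S.M 0

lemma dotOf_refines_of_prefix {s t : List ℕ} (h : s <+: t) :
    P.refines (S.dotOf t) (S.dotOf s) := by
  obtain ⟨r, rfl⟩ := h
  rw [S.dotOf_append]
  exact S.dotGo_refines r _ _

lemma dotOf_strict_of_proper {s t : List ℕ} (h : s <+: t) (hne : s ≠ t) :
    P.strict (S.dotOf t) (S.dotOf s) := by
  obtain ⟨r, rfl⟩ := h
  have hr : r ≠ [] := by rintro rfl; simp at hne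
  rw [S.dotOf_append]
  exact S.dotGo_strict hr _ _

lemma dotOf_refines_M (s : List ℕ) : P.refines (S.dotOf s) S.M :=
  S.dotOf_refines_of_prefix (List.nil_prefix (l := s))

lemma dotOf_decOK {s : List ℕ} {n : ℕ} (h : s.length = n + 1) :
    S.decOK (S.dotOf s) n := by
  rcases List.eq_nil_or_concat s with rfl | ⟨w, a, rfl⟩
  · simp at h
  · have hw : w.length = n := by simpa using h
    rw [List.concat_eq_append, S.dotOf_append, hw]
    exact S.stepD_decOK _ n a

end Setup

end Stmt12Aux
namespace Stmt12Aux
namespace Setup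

variable {V : Type} {P : PreNaturalSpace V} (S : Setup P)

/-- the spread space. -/
noncomputable def QS : PreNaturalSpace (List ℕ) where
  countable' := inferInstance
  apart s t := P.apart (S.dotOf s) (S.dotOf t)
  refines s t := t <+: s
  apart_dec := Classical.decRel _
  refines_dec := Classical.decRel _
  apart_symm _ _ h := P.apart_symm _ _ h
  apart_irrefl _ h := P.apart_irrefl _ h
  apart_mono a b c hab hcb :=
    P.apart_mono _ _ _ (S.dotOf_refines_of_prefix hab) hcb
  refines_refl a := List.prefix_refl a
  refines_trans _ _ _ h1 h2 := h2.trans h1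
  refines_antisymm _ _ h1 h2 := h2.eq_of_length (le_antisymm h2.length_le h1.length_le)

lemma QS_refines_eq : (S.QS).refines = BairePre.refines := rfl

/-- any prefix-chain of unbounded length is a point of `QS`, and its
dot sequence is a point of `P`. -/
lemma branch_point {t : ℕ → List ℕ} (hmono : ∀ n, t n <+: t (n + 1))
    (hlen : ∀ N, ∃ n, N ≤ (t n).length) :
    (S.QS).IsPoint t ∧ P.IsPoint (fun n => S.dotOf (t n)) := by
  have hpre : ∀ {m k : ℕ}, m ≤ k → t m <+: t k := fun h => PreNaturalSpace.prefix_chain hmono h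
  have hshr : ∀ n, ∃ m, t n <+: t m ∧ t n ≠ t m := by
    intro n
    obtain ⟨m, hm⟩ := hlen ((t n).length + 1)
    rcases le_total n m with h | h
    · exact ⟨m, hpre h, fun he => by rw [← he] at hm; omega⟩
    · have := (hpre h).length_le; omega
  have hP : P.IsPoint (fun n => S.dotOf (t n)) := by
    constructor
    · intro n; exact S.dotOf_refines_of_prefix (hmono n)
    · intro n
      obtain ⟨m, hm, hne⟩ := hshr n
      exact ⟨m, S.dotOf_strict_of_proper hm hne⟩
    · intro a b hab
      obtain ⟨k, hk⟩ := S.hpe (a, b)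
      obtain ⟨n, hn⟩ := hlen (k + 1)
      have htk : (t n).take (k + 1) <+: t n := List.take_prefix _ _
      have hlen' : ((t n).take (k + 1)).length = k + 1 := by
        simp [Nat.min_eq_left hn]
      have hdec := S.dotOf_decOK hlen'
      have hdec' := S.decOK_mono (S.dotOf_refines_of_prefix htk) hdec
      rw [decOK, hk] at hdec'
      exact ⟨n, hdec' hab⟩
  refine ⟨⟨fun n => hmono n, ?_, ?_⟩, hP⟩
  · intro n
    obtain ⟨m, hm, hne⟩ := hshr n
    exact ⟨m, hm, fun he => hne he.symm⟩
  · intro a b hab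
    exact hP.decides (S.dotOf a) (S.dotOf b) hab

lemma point_hyps {t : ℕ → List ℕ} (ht : (S.QS).IsPoint t) :
    (∀ n, t n <+: t (n + 1)) ∧ ∀ N, ∃ n, N ≤ (t n).length := by
  have hmono : ∀ n, t n <+: t (n + 1) := fun n => ht.mono n
  refine ⟨hmono, PreNaturalSpace.lengths_unbounded (fun n => ?_)⟩
  obtain ⟨m, hm, hne⟩ := ht.shrink n
  exact ⟨m, hm, fun he => hne he.symm⟩

lemma dot_point {t : ℕ → List ℕ} (ht : (S.QS).IsPoint t) :
    P.IsPoint (fun n => S.dotOf (t n)) :=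
  (S.branch_point (S.point_hyps ht).1 (S.point_hyps ht).2).2

/-- the refinement morphism from the spread back to `P`. -/
noncomputable def G : RefMorphism S.QS P where
  toFun := S.dotOf
  maps_points := fun t ht => S.dot_point ht
  reflects_apart := fun _ _ _ _ h => h

/-- section of `e`. -/
noncomputable def code (a : V) : ℕ := (S.he a).choose

lemma code_spec (a : V) : S.e (S.code a) = a := (S.he a).choose_spec

lemma dotOf_append_good {s : List ℕ} {a : V}
    (h : P.strict a (S.dotOf s) ∧ S.decOK a s.length) :
    S.dotOf (s ++ [S.code a]) = a := by
  rw [S.dotOf_append]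
  show S.stepD (S.dotOf s) s.length (S.code a) = a
  rw [stepD, if_pos]
  · exact S.code_spec a
  · rw [S.code_spec a]; exact h

end Setup
end Stmt12Aux
namespace Stmt12Aux
namespace Setup

variable {V : Type} {P : PreNaturalSpace V} (S : Setup P)

/-- the tracking branch: starting from `s`, follow the point `p`. -/
noncomputable def trackSeq (p : ℕ → V) (hp : P.IsPoint p) (s : List ℕ)
    (h0 : ∃ j, P.refines (p j) (S.dotOf s)) :
    ℕ → {u : List ℕ // ∃ j, P.refines (p j) (S.dotOf u)}
  | 0 => ⟨s, h0⟩
  | n + 1 =>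
    let u := trackSeq p hp s h0 n
    let hj := (S.point_good hp u.2 u.1.length).choose_spec
    ⟨u.1 ++ [S.code (p ((S.point_good hp u.2 u.1.length).choose))], by
      rw [S.dotOf_append_good hj]
      exact ⟨_, P.refines_refl _⟩⟩

lemma trackSeq_succ_len (p : ℕ → V) (hp : P.IsPoint p) (s : List ℕ)
    (h0 : ∃ j, P.refines (p j) (S.dotOf s)) (n : ℕ) :
    ((S.trackSeq p hp s h0 (n + 1)).1).length = ((S.trackSeq p hp s h0 n).1).length + 1 ∧
      (S.trackSeq p hp s h0 n).1 <+: (S.trackSeq p hp s h0 (n + 1)).1 := by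
  constructor
  · show ((S.trackSeq p hp s h0 n).1 ++ [_]).length = _
    simp
  · exact ⟨[_], rfl⟩

lemma trackSeq_len (p : ℕ → V) (hp : P.IsPoint p) (s : List ℕ)
    (h0 : ∃ j, P.refines (p j) (S.dotOf s)) (n : ℕ) :
    ((S.trackSeq p hp s h0 n).1).length = s.length + n := by
  induction n with
  | zero => rfl
  | succ n ih =>
    rw [(S.trackSeq_succ_len p hp s h0 n).1, ih]
    omega


lemma track (p : ℕ → V) (hp : P.IsPoint p) (s : List ℕ)
    (h0 : ∃ j, P.refines (p j) (S.dotOf s)) :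
    ∃ t : ℕ → List ℕ, (S.QS).IsPoint t ∧ (∃ m, (S.QS).strict (t m) s) ∧
      ∀ n, ∃ j, P.refines (p j) (S.dotOf (t n)) := by
  refine ⟨fun n => (S.trackSeq p hp s h0 n).1, ?_, ?_, fun n => (S.trackSeq p hp s h0 n).2⟩
  · refine (S.branch_point (fun n => (S.trackSeq_succ_len p hp s h0 n).2) (fun N => ?_)).1
    refine ⟨N, ?_⟩
    rw [S.trackSeq_len]; omega
  · refine ⟨1, ?_, ?_⟩
    · show s <+: _
      have := (S.trackSeq_succ_len p hp s h0 0).2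
      exact this
    · intro he
      have h2 := S.trackSeq_len p hp s h0 1
      rw [show (fun n => (S.trackSeq p hp s h0 n).1) 1 = (S.trackSeq p hp s h0 1).1 from rfl] at he
      rw [he] at h2
      omega

lemma track_equiv {p q : ℕ → V} (hp : P.IsPoint p)
    (h : ∀ n, ∃ j, P.refines (p j) (q n)) : ¬ ∃ n, P.apart (q n) (p n) := by
  rintro ⟨n, hn⟩
  obtain ⟨j, hj⟩ := h n
  exact P.no_apart_of_common
    (P.refines_trans _ _ _ (P.refines_of_le hp.mono (le_max_left j n)) hj)
    (P.refines_of_le hp.mono (le_max_right j n)) hn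

end Setup
end Stmt12Aux
namespace Stmt12Aux
namespace Setup

variable {V : Type} {P : PreNaturalSpace V} (S : Setup P)

open Classical in
/-- one folding step of the trail morphism. -/
noncomputable def hstep (s : List ℕ) (a : V) : List ℕ :=
  if P.strict a (S.dotOf s) ∧ S.decOK a s.length then s ++ [S.code a] else s

/-- the trail morphism on underlying lists of dots. -/
noncomputable def hf (l : List V) : List ℕ := l.foldl S.hstep []

lemma hstep_prefix (s : List ℕ) (a : V) : s <+: S.hstep s a := by
  unfold hstep; split
  · exact ⟨[S.code a], rfl⟩
  · exact List.prefix_refl s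

lemma foldl_hstep_prefix (r : List V) : ∀ s, s <+: r.foldl S.hstep s := by
  induction r with
  | nil => intro s; exact List.prefix_refl s
  | cons a r ih => intro s; exact (S.hstep_prefix s a).trans (ih _)

lemma hf_append (l r : List V) : S.hf (l ++ r) = r.foldl S.hstep (S.hf l) :=
  List.foldl_append ..

lemma hf_concat (w : List V) (a : V) : S.hf (w ++ [a]) = S.hstep (S.hf w) a := by
  rw [S.hf_append]; rfl

lemma hf_prefix {l l' : List V} (h : l <+: l') : S.hf l <+: S.hf l' := by
  obtain ⟨r, rfl⟩ := h
  rw [S.hf_append]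
  exact S.foldl_hstep_prefix r _

lemma dot_foldl_mem (r : List V) :
    ∀ s, S.dotOf (r.foldl S.hstep s) = S.dotOf s ∨ S.dotOf (r.foldl S.hstep s) ∈ r := by
  induction r with
  | nil => intro s; exact Or.inl rfl
  | cons a r ih =>
    intro s
    rw [List.foldl_cons]
    rcases ih (S.hstep s a) with h | h
    · rw [h]
      unfold hstep; split
      · next hc => rw [S.dotOf_append_good hc]; exact Or.inr List.mem_cons_self
      · exact Or.inl rfl
    · exact Or.inr (List.mem_cons_of_mem _ h)

lemma hf_dot (l : List V) : S.dotOf (S.hf l) = S.M ∨ S.dotOf (S.hf l) ∈ l :=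
  S.dot_foldl_mem l []

/-- the sequence of last dots of a sequence of trails. -/
noncomputable def dSeq (T : ℕ → P.Trail) (n : ℕ) : V := ((T n).1.getLast?).getD S.M

section TrailPoint

variable {T : ℕ → P.Trail}

lemma trail_prefix (hT : P.trailSpace.IsPoint T) : ∀ {m k : ℕ}, m ≤ k → (T m).1 <+: (T k).1 :=
  fun h => PreNaturalSpace.prefix_chain (t := fun n => (T n).1) (fun n => hT.mono n) h

lemma trail_len_unbounded (hT : P.trailSpace.IsPoint T) : ∀ N, ∃ m, N ≤ (T m).1.length :=
  PreNaturalSpace.lengths_unbounded (t := fun n => (T n).1) (fun n => by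
    obtain ⟨m, hm⟩ := hT.shrink n
    exact ⟨m, hm.1, fun he => hm.2 (Subtype.ext he.symm)⟩)

lemma trail_index_lt (hT : P.trailSpace.IsPoint T) {n m : ℕ} (h : (T n).1.length < (T m).1.length) : n < m := by
  by_contra hle
  push_neg at hle
  have := (trail_prefix hT hle).length_le
  omega

lemma dSeq_getLast {n : ℕ} (hne : (T n).1 ≠ []) :
    (T n).1.getLast? = some (S.dSeq T n) := by
  cases h : (T n).1.getLast? with
  | none => exact absurd (List.getLast?_eq_none_iff.mp h) hne
  | some x => simp [dSeq, h]

lemma dSeq_mem_getLast {n : ℕ} (hne : (T n).1 ≠ []) :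
    S.dSeq T n ∈ (T n).1.getLast? := by
  rw [S.dSeq_getLast hne]; rfl

lemma dSeq_eq_M {n : ℕ} (hne : (T n).1 = []) : S.dSeq T n = S.M := by
  simp [dSeq, hne]

/-- the key strictness lemma for `dSeq`. -/
lemma dSeq_strict_target (hT : P.trailSpace.IsPoint T) {n m : ℕ} {c : V}
    (hc : c = S.M ∨ c ∈ (T n).1)
    (hlen : max ((T n).1.length + 1) 2 ≤ (T m).1.length) :
    P.strict (S.dSeq T m) c := by
  have hlt : (T n).1.length < (T m).1.length := by omega
  have hnm : n < m := trail_index_lt hT hlt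
  have hpre : (T n).1 <+: (T m).1 := trail_prefix hT hnm.le
  have hmne : (T m).1 ≠ [] := by
    intro he; rw [he] at hlen; simp at hlen
  have hx := S.dSeq_mem_getLast hmne
  rcases hc with rfl | hcm
  · -- target is the maximal dot: use the head of `T m`
    have h2 : 2 ≤ (T m).1.length := by omega
    obtain ⟨a, r, hr⟩ : ∃ a r, (T m).1 = a :: r := by
      cases h : (T m).1 with
      | nil => exact absurd h hmne
      | cons a r => exact ⟨a, r, rfl⟩
    have hpre1 : [a] <+: (T m).1 := by rw [hr]; exact ⟨r, rfl⟩
    have hne1 : [a] ≠ (T m).1 := by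
      intro he; rw [← he] at h2; simp at h2
    have hstr := P.chain_last_strict (T m).2 hpre1 hne1 hx (by rfl)
    have haM : P.refines a S.M := S.hM a
    exact P.strict_of_strict_refines hstr haM
  · have hne' : (T n).1 ≠ [] := List.ne_nil_of_mem hcm
    have hy := S.dSeq_mem_getLast hne'
    have hne2 : (T n).1 ≠ (T m).1 := by
      intro he; rw [he] at hlt; omega
    have hstr := P.chain_last_strict (T m).2 hpre hne2 hx hy
    have hrc : P.refines (S.dSeq T n) c := P.chain_last_refines (T n).2 hcm hy
    exact P.strict_of_strict_refines hstr hrc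

lemma dSeq_point (hT : P.trailSpace.IsPoint T) : P.IsPoint (S.dSeq T) := by
  constructor
  · intro n
    cases h : (T n).1.getLast? with
    | none =>
      have : S.dSeq T n = S.M := by simp [dSeq, h]
      rw [this]; exact S.hM _
    | some y =>
      have hne : (T n).1 ≠ [] := by
        intro he; rw [he] at h; simp at h
      have hne' : (T (n + 1)).1 ≠ [] := by
        intro he
        have := (trail_prefix hT (Nat.le_succ n)).length_le
        rw [he] at this
        simp at this
        exact hne this
      have hx := S.dSeq_mem_getLast hne'
      have hy : S.dSeq T n = y := by simp [dSeq, h]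
      rw [hy]
      exact P.last_refines_of_prefix (T (n + 1)).2 (trail_prefix hT (Nat.le_succ n)) hx
        (by rw [h]; rfl)
  · intro n
    obtain ⟨m, hm⟩ := trail_len_unbounded hT (max ((T n).1.length + 1) 2)
    refine ⟨m, ?_⟩
    have hc : S.dSeq T n = S.M ∨ S.dSeq T n ∈ (T n).1 := by
      rcases eq_or_ne (T n).1 [] with he | he
      · exact Or.inl (S.dSeq_eq_M he)
      · exact Or.inr (List.mem_of_mem_getLast? (S.dSeq_mem_getLast he))
    rcases hc with he | hcm
    · rw [he]
      exact S.dSeq_strict_target hT (Or.inl rfl) hm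
    · exact S.dSeq_strict_target hT (Or.inr hcm) hm
  · intro a b hab
    have hap : P.trailSpace.apart ⟨[a], List.isChain_singleton a⟩ ⟨[b], List.isChain_singleton b⟩ :=
      ⟨a, by rfl, b, by rfl, hab⟩
    obtain ⟨m, hm⟩ := hT.decides _ _ hap
    rcases hm with ⟨x, hx, y, hy, hxy⟩ | ⟨x, hx, y, hy, hxy⟩
    · have hyx : y = a := Eq.symm (by simpa using hy)
      have hdx : S.dSeq T m = x := by
        simp [dSeq, Option.mem_def.mp hx]
      exact ⟨m, Or.inl (hdx ▸ hyx ▸ hxy)⟩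
    · have hyx : y = b := Eq.symm (by simpa using hy)
      have hdx : S.dSeq T m = x := by
        simp [dSeq, Option.mem_def.mp hx]
      exact ⟨m, Or.inr (hdx ▸ hyx ▸ hxy)⟩

/-- the image lists of a trail point grow without bound. -/
lemma hf_growth (hT : P.trailSpace.IsPoint T) (n : ℕ) : ∃ m, (S.hf (T n).1).length < (S.hf (T m).1).length := by
  by_contra hcon
  push_neg at hcon
  set s := S.hf (T n).1 with hs
  set k := s.length with hk
  set c := S.dotOf s with hcc
  have hd := S.dSeq_point hT
  -- a stage at which the k-th pair is decided
  have hdec : ∃ i, S.decOK (S.dSeq T i) k := by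
    by_cases hap : P.apart (S.pe k).1 (S.pe k).2
    · obtain ⟨i, hi⟩ := hd.decides _ _ hap
      exact ⟨i, fun _ => hi⟩
    · exact ⟨0, fun h => absurd h hap⟩
  obtain ⟨i, hi⟩ := hdec
  obtain ⟨m₁, hm₁⟩ := trail_len_unbounded hT (max ((T n).1.length + 1) 2)
  set m₀ := max i m₁ with hm₀
  have hlenm : max ((T n).1.length + 1) 2 ≤ (T m₀).1.length :=
    le_trans hm₁ (trail_prefix hT (le_max_right i m₁)).length_le
  have hdm : S.decOK (S.dSeq T m₀) k :=
    S.decOK_mono (P.refines_of_le hd.mono (le_max_left i m₁)) hi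
  have hstr : P.strict (S.dSeq T m₀) c := by
    refine S.dSeq_strict_target hT ?_ hlenm
    rcases S.hf_dot (T n).1 with h | h
    · exact Or.inl h
    · exact Or.inr h
  -- decompose T m₀
  have hmne : (T m₀).1 ≠ [] := by
    intro he; rw [he] at hlenm; simp at hlenm
  have hsplit := List.dropLast_append_getLast? _ (S.dSeq_mem_getLast hmne)
  set w := (T m₀).1.dropLast with hw
  have hnm : n < m₀ := trail_index_lt hT (by omega)
  have hprew : (T n).1 <+: w := by
    refine List.prefix_of_prefix_length_le (trail_prefix hT hnm.le)
      (by rw [← hsplit]; exact ⟨[S.dSeq T m₀], rfl⟩) ?_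
    have : w.length + 1 = (T m₀).1.length := by
      rw [← hsplit]; simp
    omega
  -- hf w = s
  have h1 : s <+: S.hf w := S.hf_prefix hprew
  have h2 : S.hf w <+: S.hf (T m₀).1 := S.hf_prefix (by rw [← hsplit]; exact ⟨[S.dSeq T m₀], rfl⟩)
  have h3 : (S.hf (T m₀).1).length ≤ k := hcon m₀
  have hfw : S.hf w = s := by
    have := h1.length_le
    have := h2.length_le
    exact (h1.eq_of_length (by omega)).symm
  -- contradiction
  have hfin : S.hf (T m₀).1 = S.hstep s (S.dSeq T m₀) := by
    rw [← hsplit, S.hf_concat, hfw]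
  rw [hstep, if_pos ⟨hstr, hdm⟩] at hfin
  have := hcon m₀
  rw [hfin] at this
  simp [hk] at this

lemma F_maps (hT : P.trailSpace.IsPoint T) : (S.QS).IsPoint (fun n => S.hf (T n).1) := by
  refine (S.branch_point (fun n => S.hf_prefix (hT.mono n)) ?_).1
  intro N
  induction N with
  | zero => exact ⟨0, Nat.zero_le _⟩
  | succ N ih =>
    obtain ⟨n, hn⟩ := ih
    obtain ⟨m, hm⟩ := S.hf_growth hT n
    exact ⟨m, by omega⟩

end TrailPoint

lemma F_reflects {T U : ℕ → P.Trail} (hT : P.trailSpace.IsPoint T)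
    (hU : P.trailSpace.IsPoint U)
    (h : ∃ n, (S.QS).apart (S.hf (T n).1) (S.hf (U n).1)) :
    ∃ n, P.trailSpace.apart (T n) (U n) := by
  obtain ⟨n, hap⟩ := h
  obtain ⟨m₁, hm₁⟩ := trail_len_unbounded hT 1
  obtain ⟨m₂, hm₂⟩ := trail_len_unbounded hU 1
  set m := max n (max m₁ m₂) with hm
  have hTm : (T m).1 ≠ [] := by
    have : 1 ≤ (T m).1.length :=
      le_trans hm₁ (trail_prefix hT (le_trans (le_max_left m₁ m₂) (le_max_right n _))).length_le
    intro he; rw [he] at this; simp at this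
  have hUm : (U m).1 ≠ [] := by
    have : 1 ≤ (U m).1.length :=
      le_trans hm₂ (trail_prefix hU (le_trans (le_max_right m₁ m₂) (le_max_right n _))).length_le
    intro he; rw [he] at this; simp at this
  have hrT : P.refines (S.dSeq T m) (S.dotOf (S.hf (T n).1)) := by
    rcases S.hf_dot (T n).1 with h1 | h1
    · rw [h1]; exact S.hM _
    · have hmem : S.dotOf (S.hf (T n).1) ∈ (T m).1 :=
        (trail_prefix hT (le_max_left n _)).subset h1
      exact P.chain_last_refines (T m).2 hmem (S.dSeq_mem_getLast hTm)
  have hrU : P.refines (S.dSeq U m) (S.dotOf (S.hf (U n).1)) := by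
    rcases S.hf_dot (U n).1 with h1 | h1
    · rw [h1]; exact S.hM _
    · have hmem : S.dotOf (S.hf (U n).1) ∈ (U m).1 :=
        (trail_prefix hU (le_max_left n _)).subset h1
      exact P.chain_last_refines (U m).2 hmem (S.dSeq_mem_getLast hUm)
  have hap' : P.apart (S.dotOf (S.hf (T n).1)) (S.dotOf (S.hf (U n).1)) := hap
  have hap1 : P.apart (S.dotOf (S.hf (T n).1)) (S.dSeq U m) :=
    P.apart_mono _ _ _ hrU hap'
  have hap2 : P.apart (S.dSeq T m) (S.dSeq U m) :=
    P.apart_symm _ _ (P.apart_mono _ _ _ hrT (P.apart_symm _ _ hap1))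
  exact ⟨m, S.dSeq T m, S.dSeq_mem_getLast hTm, S.dSeq U m, S.dSeq_mem_getLast hUm, hap2⟩

/-- the trail morphism from `P`'s trail space to the spread. -/
noncomputable def F : RefMorphism P.trailSpace S.QS where
  toFun u := S.hf u.1
  maps_points := fun _ hT => S.F_maps hT
  reflects_apart := fun _ _ hT hU h => S.F_reflects hT hU h

end Setup
end Stmt12Aux
namespace Stmt12Aux

open Classical

variable {V : Type} (P : PreNaturalSpace V)

lemma segList_last (p : ℕ → V) (n : ℕ) : (segList p (n + 1)).getLast? = some (p n) := by
  show (if (segList p n).getLast? = some (p n) then segList p n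
    else segList p n ++ [p n]).getLast? = some (p n)
  split
  · next h => exact h
  · exact List.getLast?_concat

lemma segList_prefix_succ (p : ℕ → V) (n : ℕ) : segList p n <+: segList p (n + 1) := by
  show segList p n <+: (if (segList p n).getLast? = some (p n) then segList p n
    else segList p n ++ [p n])
  split
  · exact List.prefix_refl _
  · exact ⟨[p n], rfl⟩

lemma segList_prefix (p : ℕ → V) {n k : ℕ} (h : n ≤ k) : segList p n <+: segList p k :=
  PreNaturalSpace.prefix_chain (segList_prefix_succ p) h

lemma segList_mem {p : ℕ → V} {v : V} : ∀ {n : ℕ}, v ∈ segList p n → ∃ j, j < n ∧ v = p j := by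
  intro n
  induction n with
  | zero => intro h; simp [segList] at h
  | succ n ih =>
    intro h
    rw [show segList p (n+1) = (if (segList p n).getLast? = some (p n) then segList p n
      else segList p n ++ [p n]) from rfl] at h
    split at h
    · obtain ⟨j, hj, hv⟩ := ih h
      exact ⟨j, by omega, hv⟩
    · rcases List.mem_append.mp h with h1 | h1
      · obtain ⟨j, hj, hv⟩ := ih h1
        exact ⟨j, by omega, hv⟩
      · exact ⟨n, by omega, List.mem_singleton.mp h1⟩

lemma segList_chain {p : ℕ → V} (hmono : ∀ n, P.refines (p (n + 1)) (p n)) (n : ℕ) :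
    (segList p n).Chain' fun a b => P.strict b a := by
  induction n with
  | zero => exact List.isChain_nil
  | succ n ih =>
    show List.Chain' _ (if (segList p n).getLast? = some (p n) then segList p n
      else segList p n ++ [p n])
    split
    · exact ih
    · next hne =>
      refine List.isChain_append.mpr ⟨ih, List.isChain_singleton _, ?_⟩
      intro x hx y hy
      have hyp : y = p n := Eq.symm (by simpa using hy)
      cases n with
      | zero => simp [segList] at hx
      | succ m =>
        rw [segList_last p m] at hx
        have hxp : x = p m := Eq.symm (by simpa using hx)
        subst hyp hxp
        refine ⟨hmono m, fun he => ?_⟩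
        rw [segList_last p m, he] at hne
        exact hne rfl

/-- the trail point associated to a point. -/
noncomputable def segPt (p : P.Pt) : P.trailSpace.Pt := by
  refine ⟨fun n => ⟨segList p.1 n, segList_chain P p.2.mono n⟩, ?_, ?_, ?_⟩
  · intro n
    exact segList_prefix_succ p.1 n
  · intro n
    obtain ⟨m, hm⟩ := p.2.shrink n
    have hnm : n < m := P.shrink_gt p.2 hm
    refine ⟨m + 1, segList_prefix p.1 (by omega), fun he => ?_⟩
    have he' : segList p.1 (m + 1) = segList p.1 n := congrArg Subtype.val he
    cases n with
    | zero =>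
      have := segList_last p.1 m
      rw [he'] at this
      simp [segList] at this
    | succ j =>
      have h1 := segList_last p.1 m
      rw [he', segList_last p.1 j] at h1
      have h2 : p.1 m = p.1 j := by simpa using h1.symm
      have h3 : P.refines (p.1 (j + 1)) (p.1 j) := p.2.mono j
      rw [← h2] at h3
      exact hm.2 (P.refines_antisymm _ _ hm.1 h3)
  · rintro u v ⟨x, hx, y, hy, hxy⟩
    obtain ⟨i, hi⟩ := p.2.decides x y hxy
    rcases hi with hi | hi
    · exact ⟨i + 1, Or.inl ⟨p.1 i, by rw [segList_last]; rfl, x, hx, hi⟩⟩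
    · exact ⟨i + 1, Or.inr ⟨p.1 i, by rw [segList_last]; rfl, y, hy, hi⟩⟩

namespace Setup

variable {P} (S : Setup P)

/-- the point map `P → Q`. -/
noncomputable def fmap (p : P.Pt) : (S.QS).Pt := S.F.pointMap (segPt P p)

/-- the point map `Q → P`. -/
noncomputable def gmap (q : (S.QS).Pt) : P.Pt := S.G.pointMap q

lemma fmap_natural : P.IsNaturalMorphismMap S.QS S.fmap :=
  Or.inr ⟨S.F, fun p => ⟨segPt P p, fun _ => rfl, rfl⟩⟩

lemma gmap_natural : (S.QS).IsNaturalMorphismMap P S.gmap :=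
  Or.inl ⟨S.G, fun _ => rfl⟩

lemma gf_equiv (x : P.Pt) : P.pEquiv (S.gmap (S.fmap x)) x := by
  rintro ⟨n, hap⟩
  have hap' : P.apart (S.dotOf (S.hf (segList x.1 n))) (x.1 n) := hap
  rcases S.hf_dot (segList x.1 n) with h | h
  · rw [h] at hap'
    exact P.no_apart_of_common (S.hM (x.1 n)) (P.refines_refl (x.1 n)) hap'
  · obtain ⟨j, _, hj⟩ := segList_mem h
    rw [hj] at hap'
    exact P.point_terms_not_apart x.2 j n hap'

lemma fg_equiv (y : (S.QS).Pt) : (S.QS).pEquiv (S.fmap (S.gmap y)) y := by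
  rintro ⟨n, hap⟩
  have hap' : P.apart (S.dotOf (S.hf (segList (fun k => S.dotOf (y.1 k)) n)))
      (S.dotOf (y.1 n)) := hap
  rcases S.hf_dot (segList (fun k => S.dotOf (y.1 k)) n) with h | h
  · rw [h] at hap'
    exact P.no_apart_of_common (S.dotOf_refines_M (y.1 n)) (P.refines_refl _) hap'
  · obtain ⟨j, _, hj⟩ := segList_mem h
    rw [hj] at hap'
    have hmono : ∀ k, y.1 k <+: y.1 (k + 1) := fun k => y.2.mono k
    have h1 : P.refines (S.dotOf (y.1 (max j n))) (S.dotOf (y.1 j)) :=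
      S.dotOf_refines_of_prefix (PreNaturalSpace.prefix_chain hmono (le_max_left j n))
    have h2 : P.refines (S.dotOf (y.1 (max j n))) (S.dotOf (y.1 n)) :=
      S.dotOf_refines_of_prefix (PreNaturalSpace.prefix_chain hmono (le_max_right j n))
    exact P.no_apart_of_common h1 h2 hap'

end Setup
end Stmt12Aux
namespace Stmt12Aux
namespace Setup

variable {V : Type} {P : PreNaturalSpace V} (S : Setup P)

lemma QS_isSucc_iff (b c : List ℕ) : (S.QS).IsSucc b c ↔ ∃ x, b = c ++ [x] := by
  constructor
  · rintro ⟨⟨hpre, hne⟩, hmin⟩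
    -- hpre : c <+: b
    have hlen : c.length + 1 ≤ b.length := by
      have := hpre.length_le
      rcases lt_or_eq_of_le this with h | h
      · omega
      · exact absurd (hpre.eq_of_length h).symm hne
    set d := b.take (c.length + 1) with hd
    have hdpre : d <+: b := List.take_prefix _ _
    have hdlen : d.length = c.length + 1 := by
      simp [hd, Nat.min_eq_left hlen]
    have hcd : c <+: d := List.prefix_take_iff.mpr ⟨hpre, by omega⟩
    have hdb : d = b := by
      by_contra hne2
      have := hmin d ⟨hdpre, fun he => hne2 he.symm⟩ hcd
      rw [this] at hdlen
      omega
    have hb : b.length = c.length + 1 := by rw [← hdb, hdlen]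
    obtain ⟨r, hr⟩ := hcd
    have hrlen : r.length = 1 := by
      have := congrArg List.length hr
      simp [hdlen] at this
      omega
    obtain ⟨z, rfl⟩ := List.length_eq_one_iff.mp hrlen
    exact ⟨z, by rw [← hdb, ← hr]⟩
  · rintro ⟨x, rfl⟩
    refine ⟨⟨⟨[x], rfl⟩, by simp⟩, ?_⟩
    rintro d ⟨hdpre, hdne⟩ hcd
    -- hdpre : d <+: c ++ [x], hdne : d ≠ c ++ [x], hcd : c <+: d
    have h1 := hdpre.length_le
    have h2 := hcd.length_le
    have hlt : d.length < c.length + 1 := by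
      simp at h1
      rcases lt_or_eq_of_le h1 with h | h
      · omega
      · exact absurd (hdpre.eq_of_length (by simpa using h)) (fun he => hdne he.symm)
    exact (hcd.eq_of_length (by omega)).symm

/-- the list of prefixes of `a`. -/
def prefs (a : List ℕ) : List (List ℕ) := (List.range (a.length + 1)).map (a.take ·)

lemma prefs_head (a : List ℕ) : (prefs a).head? = some [] := by
  rw [prefs, List.range_succ_eq_map]
  simp

lemma prefs_last (a : List ℕ) : (prefs a).getLast? = some a := by
  rw [prefs, List.range_succ, List.map_append, List.map_singleton, List.getLast?_concat]
  simp

lemma prefs_concat (c : List ℕ) (x : ℕ) : prefs (c ++ [x]) = prefs c ++ [c ++ [x]] := by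
  rw [prefs, prefs]
  have hlen : (c ++ [x]).length + 1 = (c.length + 1) + 1 := by simp
  rw [hlen, List.range_succ, List.map_append]
  congr 1
  · apply List.map_congr_left
    intro i hi
    have hi' : i ≤ c.length := by
      have := List.mem_range.mp hi; omega
    rw [List.take_append, Nat.sub_eq_zero_of_le hi']
    simp
  · simp [List.take_of_length_le (by simp : (c ++ [x]).length ≤ c.length + 1)]

lemma prefs_chain (a : List ℕ) : (S.QS).SuccChain (prefs a) := by
  rw [PreNaturalSpace.SuccChain, prefs, List.Chain', List.isChain_map]
  rw [List.isChain_range_succ]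
  intro m hm
  refine (S.QS_isSucc_iff _ _).mpr ⟨a[m], ?_⟩
  rw [List.take_succ]
  congr 1
  simp [List.getElem?_eq_getElem hm]

lemma succChain_eq_prefs (l : List (List ℕ)) (hc : (S.QS).SuccChain l)
    (hh : l.head? = some []) : ∀ a, l.getLast? = some a → l = prefs a := by
  induction l using List.reverseRecOn with
  | nil => intro a ha; simp at ha
  | append_singleton l' b ih =>
    intro a ha
    rw [List.getLast?_concat] at ha
    have hba : b = a := by simpa using ha
    subst hba
    rcases List.eq_nil_or_concat l' with rfl | ⟨w, c, rfl⟩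
    · have : b = [] := by simpa using hh
      subst this
      rfl
    · simp only [List.concat_eq_append] at ih hc hh ⊢
      have hl'ne : w ++ [c] ≠ ([] : List (List ℕ)) := by simp
      have hh' : (w ++ [c]).head? = some [] := by
        rw [List.head?_append_of_ne_nil _ hl'ne] at hh
        exact hh
      rw [PreNaturalSpace.SuccChain] at hc
      have hsplit := List.isChain_append.mp hc
      have hsucc : (S.QS).IsSucc b c := by
        refine hsplit.2.2 c ?_ b (by simp)
        rw [List.getLast?_concat]; rfl
      obtain ⟨x, rfl⟩ := (S.QS_isSucc_iff _ _).mp hsucc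
      have hihres := ih hsplit.1 hh' c (by rw [List.getLast?_concat])
      rw [hihres, prefs_concat]

lemma QS_isTree : (S.QS).IsTree := by
  refine ⟨[], fun a => List.nil_prefix, fun a => ⟨prefs a, ⟨S.prefs_chain a, prefs_head a,
    prefs_last a⟩, fun l' hl' => S.succChain_eq_prefs l' hl'.1 hl'.2.1 a hl'.2.2⟩⟩

lemma QS_succTrails : (S.QS).SuccTrailsArePoints := by
  intro q hq
  have hstep : ∀ n, ∃ x, q (n + 1) = q n ++ [x] :=
    fun n => (S.QS_isSucc_iff _ _).mp (hq n)
  have hmono : ∀ n, q n <+: q (n + 1) := by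
    intro n; obtain ⟨x, hx⟩ := hstep n; rw [hx]; exact ⟨[x], rfl⟩
  have hlen : ∀ n, (q 0).length + n ≤ (q n).length := by
    intro n
    induction n with
    | zero => omega
    | succ n ih =>
      obtain ⟨x, hx⟩ := hstep n
      rw [hx]
      simp
      omega
  refine (S.branch_point hmono (fun N => ⟨N, ?_⟩)).1
  have := hlen N
  omega

lemma QS_isSpread : (S.QS).IsSpread := ⟨S.QS_isTree, S.QS_succTrails⟩

lemma QS_natural : (S.QS).IsNaturalSpace := by
  constructor
  · exact ⟨[], fun a => List.nil_prefix⟩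
  · intro s
    set t : ℕ → List ℕ := fun n => s ++ List.replicate n 0 with ht
    have hmono : ∀ n, t n <+: t (n + 1) := by
      intro n
      refine ⟨[0], ?_⟩
      simp [ht, List.replicate_succ']
    have hlen : ∀ N, ∃ n, N ≤ (t n).length := by
      intro N
      refine ⟨N, ?_⟩
      simp [ht]
    refine ⟨t, (S.branch_point hmono hlen).1, 1, ⟨[0], by simp [ht, List.replicate_succ']⟩, ?_⟩
    simp [ht]

lemma QS_basicOpen (hbo : P.BasicOpen) : (S.QS).BasicOpen := by
  intro s
  show (S.QS).NatOpen _
  intro x hx y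
  by_cases hyx : (S.QS).pApart y x
  · exact Or.inl hyx
  obtain ⟨q, hq, hxq⟩ := hx
  have hyq : (S.QS).pEquiv y q := (S.QS).pEquiv_trans hyx hxq
  have hgq_beg : P.begins (S.gmap q).1 (S.dotOf s) := by
    obtain ⟨k, hk⟩ := hq
    exact ⟨k, S.dotOf_strict_of_proper hk.1 (fun he => hk.2 he.symm)⟩
  have hgy : S.gmap y ∈ P.barSet (S.dotOf s) := ⟨S.gmap q, hgq_beg, hyq⟩
  have hopen : P.NatOpen (P.barSet (S.dotOf s)) := hbo (S.dotOf s)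
  rcases hopen _ hgy (S.gmap y) with h | ⟨m, hm⟩
  · obtain ⟨n, hn⟩ := h
    exact absurd hn (P.apart_irrefl _)
  refine Or.inr ⟨m, fun z hz => ?_⟩
  have hgz_beg : P.begins (S.gmap z).1 (S.dotOf (y.1 m)) := by
    obtain ⟨k, hk⟩ := hz
    exact ⟨k, S.dotOf_strict_of_proper hk.1 (fun he => hk.2 he.symm)⟩
  have hgz_mem : S.gmap z ∈ P.barSet (S.dotOf s) := hm hgz_beg
  obtain ⟨p, hp_beg, hzp⟩ := hgz_mem
  obtain ⟨j, hj⟩ := hp_beg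
  obtain ⟨t, htpt, htbeg, htref⟩ := S.track p.1 p.2 s ⟨j, hj.1⟩
  refine ⟨⟨t, htpt⟩, htbeg, ?_⟩
  have h1 : P.pEquiv (S.gmap ⟨t, htpt⟩) p := track_equiv p.2 htref
  exact P.pEquiv_trans hzp (P.pEquiv_symm h1)

end Setup
end Stmt12Aux
/-- classical: a basic-open natural space is isomorphic to a
basic-open spread whose underlying tree is the tree `(ℕ*,⊑)` of Baire space. -/
theorem stmt12 {V : Type} (P : PreNaturalSpace V) (hP : P.IsNaturalSpace)
    (hbo : P.BasicOpen) :
    ∃ Q : PreNaturalSpace (List ℕ), Q.refines = BairePre.refines ∧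
      Q.IsSpread ∧ Q.IsNaturalSpace ∧ Q.BasicOpen ∧ P.AreIsomorphic Q := by
  classical
  obtain ⟨⟨M, hM⟩, hinh⟩ := hP
  haveI := P.countable'
  haveI : Nonempty V := ⟨M⟩
  obtain ⟨e, he⟩ := exists_surjective_nat V
  obtain ⟨pe, hpe⟩ := exists_surjective_nat (V × V)
  let S : Stmt12Aux.Setup P := ⟨M, hM, hinh, e, he, pe, hpe⟩
  exact ⟨S.QS, S.QS_refines_eq, S.QS_isSpread, S.QS_natural, S.QS_basicOpen hbo,
    S.fmap, S.gmap, S.fmap_natural, S.gmap_natural, S.gf_equiv, S.fg_equiv⟩
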